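/- The space of alternal moulds ARI_al is closed under the ari-bracket: if A and B are alternal, then ari(A,B) = arit(B)·A + lu(A,B) - arit(A)·B is alternal. In particular ARI_al is a Lie algebra under ari. -/
import Mathlib


open List

variable {K : Type*} [Field K] [CharZero K]

/-- The multiset (as a list, with multiplicity) of shuffles of two words. -/
def shuffles {α : Type*} : List α → List α → List (List α)
  | [], v => [v]
  | u, [] => [u]
  | x :: u, y :: v =>
      ((shuffles u (y :: v)).map (x :: ·)) ++ ((shuffles (x :: u) v).map (y :: ·))
  termination_by u v => u.length + v.length

/-- A mould (at the level of evaluations) is alternal if all its shuffle sums over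
pairs of nonempty words vanish. -/
def Alternal (A : List K → K) : Prop :=
  ∀ u v : List K, u ≠ [] → v ≠ [] → ((shuffles u v).map A).sum = 0

/-- mould multiplication `mu`. -/
def mu (A B : List K → K) : List K → K :=
  fun w => ∑ k ∈ Finset.range (w.length + 1), A (w.take k) * B (w.drop k)

/-- `lu(A,B) = mu(A,B) - mu(B,A)`. -/
def lu (A B : List K → K) : List K → K :=
  fun w => mu A B w - mu B A w

/-- All decompositions of a word into two consecutive subwords. -/
def splits2 {α : Type*} (w : List α) : List (List α × List α) :=
  (List.range (w.length + 1)).map fun k => (w.take k, w.drop k)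

/-- All decompositions of a word into three consecutive subwords. -/
def splits3 {α : Type*} (w : List α) : List (List α × List α × List α) :=
  (splits2 w).flatMap fun p => (splits2 p.2).map fun q => (p.1, q.1, q.2)

/-- Add `s` to the first letter of a word. -/
def addFirst (s : K) : List K → List K
  | [] => []
  | x :: xs => (x + s) :: xs

/-- Add `s` to the last letter of a word. -/
def addLast (s : K) : List K → List K
  | [] => []
  | [x] => [x + s]
  | x :: xs => x :: addLast s xs

/-- `amit` for u-moulds: `(amit(B)·A)(w) = Σ_{w=abc, b,c≠∅} A(a⌈c) B(b)`. -/
def amitU (B A : List K → K) : List K → K := fun w =>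
  ((splits3 w).map fun p =>
    match p with
    | (_, [], _) => 0
    | (_, _, []) => 0
    | (a, b, c) => A (a ++ addFirst b.sum c) * B b).sum

/-- `anit` for u-moulds: `(anit(B)·A)(w) = Σ_{w=abc, a,b≠∅} A(a⌉c) B(b)`. -/
def anitU (B A : List K → K) : List K → K := fun w =>
  ((splits3 w).map fun p =>
    match p with
    | ([], _, _) => 0
    | (_, [], _) => 0
    | (a, b, c) => A (addLast b.sum a ++ c) * B b).sum

/-- `arit(B)·A = amit(B)·A - anit(B)·A` on u-moulds. -/
def aritU (B A : List K → K) : List K → K :=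
  fun w => amitU B A w - anitU B A w

/-- the ari bracket on u-moulds. -/
def ariU (A B : List K → K) : List K → K :=
  fun w => aritU B A w + lu A B w - aritU A B w

/-- `amit` for v-moulds. -/
def amitV (B A : List K → K) : List K → K := fun w =>
  ((splits3 w).map fun p =>
    match p with
    | (_, [], _) => 0
    | (_, _, []) => 0
    | (a, b, c0 :: c') => A (a ++ c0 :: c') * B (b.map (fun x => x - c0))).sum

/-- `anit` for v-moulds. -/
def anitV (B A : List K → K) : List K → K := fun w =>
  ((splits3 w).map fun p =>
    match p with
    | ([], _, _) => 0
    | (_, [], _) => 0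
    | (a, b, c) => A (a ++ c) * B (b.map (fun x => x - a.getLastD 0))).sum

/-- `arit(B)·A = amit(B)·A - anit(B)·A` on v-moulds. -/
def aritV (B A : List K → K) : List K → K :=
  fun w => amitV B A w - anitV B A w

/-- the ari bracket on v-moulds. -/
def ariV (A B : List K → K) : List K → K :=
  fun w => aritV B A w + lu A B w - aritV A B w

/-- `neg(A)(u_1,...,u_r) = A(-u_1,...,-u_r)`. -/
def negM (A : List K → K) : List K → K := fun w => A (w.map fun x => -x)

/-- `push(A)(u_1,...,u_r) = A(-u_1-⋯-u_r, u_1, ..., u_{r-1})`. -/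
def pushM (A : List K → K) : List K → K := fun w =>
  match w with
  | [] => A []
  | _ :: _ => A ((-w.sum) :: w.dropLast)

/-- `mantar(A)(u_1,...,u_r) = (-1)^{r-1} A(u_r,...,u_1)`. -/
def mantarM (A : List K → K) : List K → K :=
  fun w => (-1 : K) ^ (w.length + 1) * A w.reverse

/-- argument list for swap from u-moulds to v-moulds:
`(v_1,...,v_r) ↦ (v_r, v_{r-1}-v_r, ..., v_1-v_2)`. -/
def swapUargs (w : List K) : List K :=
  List.zipWith (· - ·) w.reverse (0 :: w.reverse)

/-- argument list for swap from v-moulds to u-moulds: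
`(u_1,...,u_r) ↦ (u_1+⋯+u_r, u_1+⋯+u_{r-1}, ..., u_1)`. -/
def swapVargs (w : List K) : List K :=
  (List.range w.length).map fun i => (w.take (w.length - i)).sum

/-- swap, sending a u-mould to a v-mould. -/
def swapUV (A : List K → K) : List K → K := fun w => A (swapUargs w)

/-- swap, sending a v-mould to a u-mould. -/
def swapVU (A : List K → K) : List K → K := fun w => A (swapVargs w)

/-- A constant-valued mould: its value depends only on the depth. -/
def IsConstantMould (C : List K → K) : Prop :=
  ∀ w w' : List K, w.length = w'.length → C w = C w'


variable {α : Type*}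


@[simp] lemma shuffles_nil_left (v : List α) : shuffles [] v = [v] := by
  rw [shuffles]

@[simp] lemma shuffles_nil_right (u : List α) : shuffles u [] = [u] := by
  cases u with
  | nil => rw [shuffles]
  | cons a l => rw [shuffles]; simp

lemma shuffles_cons_cons (x y : α) (u v : List α) :
    shuffles (x :: u) (y :: v) =
      ((shuffles u (y :: v)).map (x :: ·)) ++ ((shuffles (x :: u) v).map (y :: ·)) := by
  rw [shuffles]

lemma length_of_mem_shuffles : ∀ (u v w : List α), w ∈ shuffles u v →
    w.length = u.length + v.length
  | [], v, w, h => by simp_all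
  | x :: u, [], w, h => by simp_all
  | x :: u, y :: v, w, h => by
      rw [shuffles_cons_cons] at h
      rcases List.mem_append.1 h with h | h <;> rcases List.mem_map.1 h with ⟨a, ha, rfl⟩
      · simpa [length_of_mem_shuffles _ _ _ ha] using by omega
      · simpa [length_of_mem_shuffles _ _ _ ha] using by omega
  termination_by u v => u.length + v.length

lemma ne_nil_of_mem_shuffles {u v w : List α} (hu : u ≠ []) (h : w ∈ shuffles u v) :
    w ≠ [] := by
  have := length_of_mem_shuffles u v w h
  intro hw; subst hw; simp at this
  cases u with
  | nil => exact hu rfl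
  | cons a l => simp at this; omega

lemma sum_of_mem_shuffles {M : Type*} [AddCommMonoid M] :
    ∀ (u v w : List M), w ∈ shuffles u v → w.sum = u.sum + v.sum
  | [], v, w, h => by simp_all
  | x :: u, [], w, h => by simp_all
  | x :: u, y :: v, w, h => by
      rw [shuffles_cons_cons] at h
      rcases List.mem_append.1 h with h | h <;> rcases List.mem_map.1 h with ⟨a, ha, rfl⟩
      · rw [List.sum_cons, sum_of_mem_shuffles _ _ _ ha]
        simp [add_assoc, add_comm, add_left_comm]
      · rw [List.sum_cons, sum_of_mem_shuffles _ _ _ ha]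
        simp [add_assoc, add_comm, add_left_comm]
  termination_by u v => u.length + v.length

/-- shuffle-sum symmetry. -/
lemma shuffles_comm_sum {M : Type*} [AddCommMonoid M] :
    ∀ (u v : List α) (h : List α → M),
      ((shuffles u v).map h).sum = ((shuffles v u).map h).sum
  | [], v, h => by cases v <;> simp
  | x :: u, [], h => by simp
  | x :: u, y :: v, h => by
      rw [shuffles_cons_cons, shuffles_cons_cons y x]
      simp only [List.map_append, List.sum_append, List.map_map]
      rw [shuffles_comm_sum u (y :: v) (h ∘ (x :: ·)),
          shuffles_comm_sum (x :: u) v (h ∘ (y :: ·))]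
      exact add_comm _ _
  termination_by u v => u.length + v.length

/-- enumeration of (a, t, b) with w = a ++ t :: b -/
def splitsMid {α : Type*} : List α → List (List α × α × List α)
  | [] => []
  | t :: r => ([], t, r) :: (splitsMid r).map (fun x => (t :: x.1, x.2.1, x.2.2))

@[simp] lemma splits2_nil : splits2 ([] : List α) = [([], [])] := rfl

lemma splits2_cons (x : α) (w : List α) :
    splits2 (x :: w) = ([], x :: w) :: (splits2 w).map (fun p => (x :: p.1, p.2)) := by
  simp only [splits2, List.length_cons]
  rw [List.range_succ_eq_map]
  simp only [List.map_cons, List.map_map]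
  refine congrArg₂ _ rfl ?_
  apply List.map_congr_left
  intro k _; rfl

/-- splits2 as (nonempty-first-part enumeration) plus the head. -/
lemma splits2_eq_mid_fst : ∀ (w : List α),
    splits2 w = ([], w) :: (splitsMid w).map (fun x => (x.1 ++ [x.2.1], x.2.2))
  | [] => by simp [splitsMid]
  | t :: r => by
      rw [splits2_cons, splits2_eq_mid_fst r]
      simp [splitsMid, List.map_map, Function.comp_def]

/-- splits2 as (nonempty-second-part enumeration) plus the last. -/
lemma splits2_eq_mid_snd : ∀ (w : List α),
    splits2 w = (splitsMid w).map (fun x => (x.1, x.2.1 :: x.2.2)) ++ [(w, [])]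
  | [] => by simp [splitsMid]
  | t :: r => by
      rw [splits2_cons, splits2_eq_mid_snd r]
      simp [splitsMid, List.map_map, Function.comp_def]

section msum
variable {M : Type*} [AddCommMonoid M]

def msum (l : List α) (f : α → M) : M := (l.map f).sum

@[simp] lemma msum_nil (f : α → M) : msum ([] : List α) f = 0 := rfl
@[simp] lemma msum_cons (a : α) (l : List α) (f : α → M) :
    msum (a :: l) f = f a + msum l f := by simp [msum]
@[simp] lemma msum_append (l₁ l₂ : List α) (f : α → M) :
    msum (l₁ ++ l₂) f = msum l₁ f + msum l₂ f := by simp [msum]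
@[simp] lemma msum_map {β : Type*} (g : α → β) (l : List α) (f : β → M) :
    msum (l.map g) f = msum l (fun x => f (g x)) := by
  simp [msum, Function.comp_def]
@[simp] lemma msum_singleton (a : α) (f : α → M) : msum [a] f = f a := by simp [msum]
lemma msum_add (l : List α) (f g : α → M) :
    msum l (fun x => f x + g x) = msum l f + msum l g := by
  induction l with
  | nil => simp
  | cons a l ih => simp [ih]; abel
lemma msum_congr {l : List α} {f g : α → M} (h : ∀ x ∈ l, f x = g x) :
    msum l f = msum l g := by
  unfold msum; rw [List.map_congr_left h]
@[simp] lemma msum_zero (l : List α) : msum l (fun _ => (0 : M)) = 0 := by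
  induction l <;> simp_all

lemma msum_shuffles_cons_cons (x y : α) (u v : List α) (f : List α → M) :
    msum (shuffles (x :: u) (y :: v)) f
      = msum (shuffles u (y :: v)) (fun w => f (x :: w))
        + msum (shuffles (x :: u) v) (fun w => f (y :: w)) := by
  rw [shuffles_cons_cons]; simp

lemma msum_splits2_cons (x : α) (w : List α) (f : List α × List α → M) :
    msum (splits2 (x :: w)) f
      = f ([], x :: w) + msum (splits2 w) (fun p => f (x :: p.1, p.2)) := by
  rw [splits2_cons]; simp

/-- Deconcatenation of shuffles. -/
theorem deconcat : ∀ (u v : List α) (F : List α → List α → M),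
    msum (shuffles u v) (fun w => msum (splits2 w) (fun p => F p.1 p.2))
      = msum (splits2 u) (fun p => msum (splits2 v) (fun q =>
          msum (shuffles p.1 q.1) (fun a => msum (shuffles p.2 q.2) (fun b => F a b))))
  | [], v, F => by
      simp
  | x :: u', [], F => by
      simp
  | x :: u', y :: v', F => by
      have IH1 := deconcat u' (y :: v') (fun a b => F (x :: a) b)
      have IH2 := deconcat (x :: u') v' (fun a b => F (y :: a) b)
      rw [msum_shuffles_cons_cons]
      simp only [msum_splits2_cons x, msum_splits2_cons y]
      rw [msum_add, msum_add, IH1, IH2]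
      simp only [msum_splits2_cons, shuffles_nil_left, shuffles_nil_right, msum_singleton,
        msum_shuffles_cons_cons, msum_add]
      abel
  termination_by u v => u.length + v.length
end msum

section star
variable {M : Type*} [AddCommMonoid M]

/-- shuffles with a marked letter between the two halves of the second word. -/
theorem star2 : ∀ (u x : List α) (y : List α) (A : List α → M) (z : α),
    msum (splits2 u) (fun p => msum (shuffles p.1 x) (fun a =>
        msum (shuffles p.2 y) (fun c => A (a ++ z :: c))))
      = msum (shuffles u (x ++ z :: y)) A
  | [], x, y, A, z => by simp
  | t :: u', [], y, A, z => by
      have IH1 := star2 u' [] y (fun w => A (t :: w)) z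
      simp only [msum_splits2_cons, shuffles_nil_left, shuffles_nil_right, msum_singleton,
        List.nil_append, List.cons_append, msum_shuffles_cons_cons] at IH1 ⊢
      rw [IH1]
      abel
  | t :: u', ξ :: x', y, A, z => by
      have IH1 := star2 u' (ξ :: x') y (fun w => A (t :: w)) z
      have IH2 := star2 (t :: u') x' y (fun w => A (ξ :: w)) z
      simp only [msum_splits2_cons, shuffles_nil_left, shuffles_nil_right, msum_singleton,
        List.nil_append, List.cons_append, msum_shuffles_cons_cons, msum_add] at IH1 IH2 ⊢
      rw [← IH1, ← IH2]
      abel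
  termination_by u x => u.length + x.length
end star

section snoc
variable {M : Type*} [AddCommMonoid M]

/-- expansion of a shuffle sum by the last letter. -/
theorem snocsum : ∀ (u v : List α) (t z : α) (h : List α → M),
    msum (shuffles (u ++ [t]) (v ++ [z])) h
      = msum (shuffles u (v ++ [z])) (fun a => h (a ++ [t]))
        + msum (shuffles (u ++ [t]) v) (fun a => h (a ++ [z]))
  | [], [], t, z, h => by
      simp only [List.nil_append, shuffles_cons_cons, shuffles_nil_left, shuffles_nil_right]
      simp [add_comm]
  | [], η :: v', t, z, h => by
      have IH := snocsum [] v' t z (fun a => h (η :: a))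
      simp only [List.nil_append, List.cons_append, shuffles_nil_left, shuffles_nil_right,
        msum_shuffles_cons_cons, msum_singleton, List.append_assoc, List.cons_append,
        List.nil_append] at IH ⊢
      rw [IH]; abel
  | ξ :: u', [], t, z, h => by
      have IH := snocsum u' [] t z (fun a => h (ξ :: a))
      simp only [List.nil_append, List.cons_append, shuffles_nil_left, shuffles_nil_right,
        msum_shuffles_cons_cons, msum_singleton, List.append_assoc, List.cons_append,
        List.nil_append] at IH ⊢
      rw [IH]; abel
  | ξ :: u', η :: v', t, z, h => by
      have IH1 := snocsum u' (η :: v') t z (fun a => h (ξ :: a))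
      have IH2 := snocsum (ξ :: u') v' t z (fun a => h (η :: a))
      simp only [List.cons_append, msum_shuffles_cons_cons, msum_add] at IH1 IH2 ⊢
      rw [IH1, IH2]; abel
  termination_by u v => u.length + v.length
end snoc

attribute [local instance] Classical.propDecidable
set_option linter.unusedSectionVars false
set_option linter.unusedVariables false

@[simp] lemma addFirst_cons (s x : K) (xs : List K) :
    addFirst s (x :: xs) = (x + s) :: xs := rfl

lemma addLast_cons₂ (s x y : K) (xs : List K) :
    addLast s (x :: y :: xs) = x :: addLast s (y :: xs) := rfl

lemma addLast_concat (s z : K) : ∀ (a : List K), addLast s (a ++ [z]) = a ++ [z + s]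
  | [] => rfl
  | [x] => rfl
  | x :: y :: xs => by
      have := addLast_concat s z (y :: xs)
      simp only [List.cons_append] at this ⊢
      rw [addLast_cons₂, this]

section amitanit
variable {M : Type*} [AddCommMonoid M]

/-- the common middle term. -/
def MID (A : List K → M) (s : K) (u x y : List K) : M :=
  msum (splitsMid u) (fun q => msum (shuffles q.1 x) (fun a =>
    msum (shuffles q.2.2 y) (fun c => A (a ++ (q.2.1 + s) :: c))))

lemma inner_amit (A : List K → M) (s : K) (a : List K) :
    ∀ (u3 y : List K),
      msum (shuffles u3 y) (fun c => if c = [] then 0 else A (a ++ addFirst s c))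
        = (match u3 with
            | [] => 0
            | t :: u3' => msum (shuffles u3' y) (fun c => A (a ++ (t + s) :: c)))
          + (match y with
            | [] => 0
            | y0 :: y' => msum (shuffles u3 y') (fun c => A (a ++ (y0 + s) :: c)))
  | [], [] => by simp
  | [], y0 :: y' => by simp
  | t :: u3', [] => by simp
  | t :: u3', y0 :: y' => by
      rw [msum_shuffles_cons_cons]
      simp
end amitanit

section decomp
variable {M : Type*} [AddCommMonoid M]

theorem amit_decomp_nil (A : List K → M) (s : K) (u x : List K) :
    msum (splits2 u) (fun p => msum (shuffles p.1 x) (fun a =>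
        msum (shuffles p.2 ([] : List K)) (fun c =>
          if c = [] then 0 else A (a ++ addFirst s c))))
      = MID A s u x [] := by
  have h1 : ∀ p ∈ splits2 u, msum (shuffles p.1 x) (fun a =>
        msum (shuffles p.2 ([] : List K)) (fun c =>
          if c = [] then 0 else A (a ++ addFirst s c)))
      = msum (shuffles p.1 x) (fun a => (match p.2 with
          | [] => 0
          | t :: r => msum (shuffles r ([] : List K)) (fun c => A (a ++ (t + s) :: c)))) := by
    intro p _
    refine msum_congr (fun a _ => ?_)
    rw [inner_amit A s a p.2 []]
    exact add_zero _
  rw [msum_congr h1, splits2_eq_mid_snd]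
  simp [MID]

theorem amit_decomp_cons (A : List K → M) (s : K) (u x : List K) (y0 : K) (y' : List K) :
    msum (splits2 u) (fun p => msum (shuffles p.1 x) (fun a =>
        msum (shuffles p.2 (y0 :: y')) (fun c =>
          if c = [] then 0 else A (a ++ addFirst s c))))
      = MID A s u x (y0 :: y') + msum (shuffles u (x ++ (y0 + s) :: y')) A := by
  have h1 : ∀ p ∈ splits2 u, msum (shuffles p.1 x) (fun a =>
        msum (shuffles p.2 (y0 :: y')) (fun c =>
          if c = [] then 0 else A (a ++ addFirst s c)))
      = msum (shuffles p.1 x) (fun a => (match p.2 with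
          | [] => 0
          | t :: r => msum (shuffles r (y0 :: y')) (fun c => A (a ++ (t + s) :: c))))
        + msum (shuffles p.1 x) (fun a =>
            msum (shuffles p.2 y') (fun c => A (a ++ (y0 + s) :: c))) := by
    intro p _
    rw [← msum_add]
    refine msum_congr (fun a _ => ?_)
    rw [inner_amit A s a p.2 (y0 :: y')]
  rw [msum_congr h1, msum_add]
  congr 1
  · rw [splits2_eq_mid_snd]; simp [MID]
  · exact star2 u x y' A (y0 + s)

theorem anit_decomp_nil (A : List K → M) (s : K) (u y : List K) :
    msum (splits2 u) (fun p => msum (shuffles p.1 ([] : List K)) (fun a =>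
        msum (shuffles p.2 y) (fun c =>
          if a = [] then 0 else A (addLast s a ++ c))))
      = MID A s u [] y := by
  rw [splits2_eq_mid_fst]
  simp only [msum_cons, msum_map, shuffles_nil_left, shuffles_nil_right, msum_singleton,
    msum_nil, eq_self_iff_true, if_true, msum_zero, zero_add, add_zero, MID]
  refine msum_congr (fun m _ => ?_)
  refine msum_congr (fun c _ => ?_)
  rw [if_neg (by simp), addLast_concat]
  simp

theorem anit_decomp_concat (A : List K → M) (s : K) (u y : List K) (x' : List K) (z : K) :
    msum (splits2 u) (fun p => msum (shuffles p.1 (x' ++ [z])) (fun a =>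
        msum (shuffles p.2 y) (fun c =>
          if a = [] then 0 else A (addLast s a ++ c))))
      = MID A s u (x' ++ [z]) y + msum (shuffles u (x' ++ (z + s) :: y)) A := by
  have hstar := star2 u x' y A (z + s)
  rw [splits2_eq_mid_fst] at hstar ⊢
  simp only [msum_cons, msum_map, shuffles_nil_left, msum_singleton, msum_nil,
    zero_add, add_zero] at hstar ⊢
  rw [← hstar]
  have h1 : ∀ m ∈ splitsMid u,
      msum (shuffles (m.1 ++ [m.2.1]) (x' ++ [z])) (fun a =>
        msum (shuffles m.2.2 y) (fun c =>
          if a = [] then 0 else A (addLast s a ++ c)))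
      = msum (shuffles m.1 (x' ++ [z])) (fun a =>
          msum (shuffles m.2.2 y) (fun c => A (a ++ (m.2.1 + s) :: c)))
        + msum (shuffles (m.1 ++ [m.2.1]) x') (fun a =>
            msum (shuffles m.2.2 y) (fun c => A (a ++ (z + s) :: c))) := by
    intro m _
    rw [snocsum]
    congr 1
    · refine msum_congr (fun a _ => ?_)
      refine msum_congr (fun c _ => ?_)
      rw [if_neg (by simp), addLast_concat]
      simp
    · refine msum_congr (fun a _ => ?_)
      refine msum_congr (fun c _ => ?_)
      rw [if_neg (by simp), addLast_concat]
      simp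
  rw [msum_congr h1, msum_add, MID]
  have h2 : msum (shuffles u y) (fun c =>
        if x' ++ [z] = [] then 0 else A (addLast s (x' ++ [z]) ++ c))
      = msum (shuffles u y) (fun c => A (x' ++ (z + s) :: c)) := by
    refine msum_congr (fun c _ => ?_)
    rw [if_neg (by simp), addLast_concat]
    simp
  rw [h2]
  abel
end decomp

section helpers
variable {M : Type*} [AddCommMonoid M] {β : Type*}

lemma msum_comm (l : List α) (m : List β) (f : α → β → M) :
    msum l (fun x => msum m (fun y => f x y)) = msum m (fun y => msum l (fun x => f x y)) := by
  induction l with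
  | nil => simp
  | cons a l ih => simp [ih, msum_add]

lemma msum_flatMap (l : List α) (g : α → List β) (f : β → M) :
    msum (l.flatMap g) f = msum l (fun x => msum (g x) f) := by
  induction l with
  | nil => simp [msum]
  | cons a l ih => simp only [List.flatMap_cons, msum_append, msum_cons, ih]

lemma msum_mul_left {R : Type*} [NonUnitalNonAssocSemiring R] (l : List α) (r : R)
    (f : α → R) : msum l (fun x => r * f x) = r * msum l f := by
  simpa [msum] using List.sum_map_mul_left l f r

lemma msum_mul_right {R : Type*} [NonUnitalNonAssocSemiring R] (l : List α) (r : R)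
    (f : α → R) : msum l (fun x => f x * r) = msum l f * r := by
  simpa [msum] using List.sum_map_mul_right l f r

lemma msum_splits3 (w : List α) (f : List α × List α × List α → M) :
    msum (splits3 w) f
      = msum (splits2 w) (fun p => msum (splits2 p.2) (fun q => f (p.1, q.1, q.2))) := by
  unfold splits3
  rw [msum_flatMap]
  exact msum_congr (fun p _ => by simp)

/-- triple deconcatenation of shuffles, with the middle-factor sum innermost. -/
theorem deconcat3 (u v : List α) (G : List α → List α → List α → M) :
    msum (shuffles u v) (fun w => msum (splits3 w) (fun t => G t.1 t.2.1 t.2.2))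
      = msum (splits2 u) (fun p => msum (splits2 v) (fun q =>
          msum (splits2 p.2) (fun p' => msum (splits2 q.2) (fun q' =>
            msum (shuffles p.1 q.1) (fun a =>
              msum (shuffles p'.2 q'.2) (fun c =>
                msum (shuffles p'.1 q'.1) (fun b => G a b c))))))) := by
  have e1 : msum (shuffles u v) (fun w => msum (splits3 w) (fun t => G t.1 t.2.1 t.2.2))
      = msum (shuffles u v) (fun w => msum (splits2 w)
          (fun p => msum (splits2 p.2) (fun q => G p.1 q.1 q.2))) :=
    msum_congr (fun w _ => msum_splits3 w _)
  rw [e1, deconcat u v (fun w1 w2 => msum (splits2 w2) (fun q => G w1 q.1 q.2))]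
  refine msum_congr (fun p _ => msum_congr (fun q _ => ?_))
  have e2 : ∀ a ∈ shuffles p.1 q.1,
      msum (shuffles p.2 q.2) (fun b => msum (splits2 b) (fun r => G a r.1 r.2))
        = msum (splits2 p.2) (fun p' => msum (splits2 q.2) (fun q' =>
            msum (shuffles p'.1 q'.1) (fun b' => msum (shuffles p'.2 q'.2)
              (fun c => G a b' c)))) := by
    intro a _
    exact deconcat p.2 q.2 (fun b c => G a b c)
  rw [msum_congr e2]
  rw [msum_comm]
  refine msum_congr (fun p' _ => ?_)
  rw [msum_comm]
  refine msum_congr (fun q' _ => ?_)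
  refine msum_congr (fun a _ => ?_)
  exact msum_comm _ _ _
end helpers

lemma alternal_msum {A : List K → K} (hA : Alternal A) {u v : List K}
    (hu : u ≠ []) (hv : v ≠ []) : msum (shuffles u v) A = 0 := hA u v hu hv

lemma amitU_splits3 (B A : List K → K) (w : List K) :
    amitU B A w = msum (splits3 w) (fun t =>
      if t.2.1 = [] then 0 else if t.2.2 = [] then 0
      else A (t.1 ++ addFirst t.2.1.sum t.2.2) * B t.2.1) := by
  unfold amitU msum
  congr 1
  apply List.map_congr_left
  rintro ⟨a, b, c⟩ _
  cases b <;> cases c <;> simp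

lemma anitU_splits3 (B A : List K → K) (w : List K) :
    anitU B A w = msum (splits3 w) (fun t =>
      if t.2.1 = [] then 0 else if t.1 = [] then 0
      else A (addLast t.2.1.sum t.1 ++ t.2.2) * B t.2.1) := by
  unfold anitU msum
  congr 1
  apply List.map_congr_left
  rintro ⟨a, b, c⟩ _
  cases a <;> cases b <;> simp

lemma inner_block_amit (A B : List K → K) (hB : Alternal B) (X1 X2 Y1 Y2 : List K) :
    msum (splits2 X2) (fun p' => msum (splits2 Y2) (fun q' =>
      msum (shuffles X1 Y1) (fun a => msum (shuffles p'.2 q'.2) (fun c =>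
        msum (shuffles p'.1 q'.1) (fun b =>
          if b = [] then 0 else if c = [] then 0
          else A (a ++ addFirst b.sum c) * B b)))))
    = msum (splitsMid Y2) (fun m => msum (shuffles X1 Y1) (fun a =>
        msum (shuffles X2 m.2.2) (fun c => if c = [] then 0
          else A (a ++ addFirst (m.1 ++ [m.2.1]).sum c) * B (m.1 ++ [m.2.1]))))
      + msum (splitsMid X2) (fun n => msum (shuffles X1 Y1) (fun a =>
          msum (shuffles n.2.2 Y2) (fun c => if c = [] then 0
            else A (a ++ addFirst (n.1 ++ [n.2.1]).sum c) * B (n.1 ++ [n.2.1])))) := by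
  rw [splits2_eq_mid_fst X2]
  rw [msum_cons]
  congr 1
  · -- head : p' = ([], X2), b = q'.1
    rw [splits2_eq_mid_fst Y2, msum_cons]
    have h1 : msum (shuffles X1 Y1) (fun a => msum (shuffles X2 Y2) (fun c =>
        msum (shuffles ([] : List K) []) (fun b =>
          if b = [] then 0 else if c = [] then 0
          else A (a ++ addFirst b.sum c) * B b))) = 0 := by simp
    rw [h1, zero_add, msum_map]
    refine msum_congr fun m _ => msum_congr fun a _ => msum_congr fun c _ => ?_
    simp only [shuffles_nil_left, msum_singleton]
    rw [if_neg (by simp)]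
  · rw [msum_map]
    refine msum_congr fun n _ => ?_
    rw [splits2_eq_mid_fst Y2, msum_cons]
    have hz : msum ((splitsMid Y2).map fun x => (x.1 ++ [x.2.1], x.2.2))
        (fun q' => msum (shuffles X1 Y1) (fun a =>
          msum (shuffles (n.1 ++ [n.2.1], n.2.2).2 q'.2) (fun c =>
            msum (shuffles (n.1 ++ [n.2.1], n.2.2).1 q'.1) (fun b =>
              if b = [] then 0 else if c = [] then 0
              else A (a ++ addFirst b.sum c) * B b)))) = 0 := by
      rw [msum_map]
      refine (msum_congr fun m _ => ?_).trans (msum_zero _)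
      refine (msum_congr fun a _ => ?_).trans (msum_zero _)
      refine (msum_congr fun c _ => ?_).trans (msum_zero _)
      have hb : ∀ b ∈ shuffles (n.1 ++ [n.2.1]) (m.1 ++ [m.2.1]),
          (if b = [] then 0 else if c = [] then 0
            else A (a ++ addFirst b.sum c) * B b)
          = (if c = [] then 0
              else A (a ++ addFirst ((n.1 ++ [n.2.1]).sum + (m.1 ++ [m.2.1]).sum) c)) * B b := by
        intro b hbmem
        rw [if_neg (ne_nil_of_mem_shuffles (by simp) hbmem),
          sum_of_mem_shuffles _ _ _ hbmem]
        by_cases hc : c = []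
        · rw [if_pos hc, if_pos hc, zero_mul]
        · rw [if_neg hc, if_neg hc]
      rw [msum_congr hb, msum_mul_left, alternal_msum hB (by simp) (by simp), mul_zero]
    rw [hz, add_zero]
    refine msum_congr fun a _ => msum_congr fun c _ => ?_
    simp only [shuffles_nil_right, msum_singleton]
    rw [if_neg (by simp)]

lemma inner_block_anit (A B : List K → K) (hB : Alternal B) (X1 X2 Y1 Y2 : List K) :
    msum (splits2 X2) (fun p' => msum (splits2 Y2) (fun q' =>
      msum (shuffles X1 Y1) (fun a => msum (shuffles p'.2 q'.2) (fun c =>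
        msum (shuffles p'.1 q'.1) (fun b =>
          if b = [] then 0 else if a = [] then 0
          else A (addLast b.sum a ++ c) * B b)))))
    = msum (splitsMid Y2) (fun m => msum (shuffles X1 Y1) (fun a =>
        msum (shuffles X2 m.2.2) (fun c => if a = [] then 0
          else A (addLast (m.1 ++ [m.2.1]).sum a ++ c) * B (m.1 ++ [m.2.1]))))
      + msum (splitsMid X2) (fun n => msum (shuffles X1 Y1) (fun a =>
          msum (shuffles n.2.2 Y2) (fun c => if a = [] then 0
            else A (addLast (n.1 ++ [n.2.1]).sum a ++ c) * B (n.1 ++ [n.2.1])))) := by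
  rw [splits2_eq_mid_fst X2]
  rw [msum_cons]
  congr 1
  · rw [splits2_eq_mid_fst Y2, msum_cons]
    have h1 : msum (shuffles X1 Y1) (fun a => msum (shuffles X2 Y2) (fun c =>
        msum (shuffles ([] : List K) []) (fun b =>
          if b = [] then 0 else if a = [] then 0
          else A (addLast b.sum a ++ c) * B b))) = 0 := by simp
    rw [h1, zero_add, msum_map]
    refine msum_congr fun m _ => msum_congr fun a _ => msum_congr fun c _ => ?_
    simp only [shuffles_nil_left, msum_singleton]
    rw [if_neg (by simp)]
  · rw [msum_map]
    refine msum_congr fun n _ => ?_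
    rw [splits2_eq_mid_fst Y2, msum_cons]
    have hz : msum ((splitsMid Y2).map fun x => (x.1 ++ [x.2.1], x.2.2))
        (fun q' => msum (shuffles X1 Y1) (fun a =>
          msum (shuffles (n.1 ++ [n.2.1], n.2.2).2 q'.2) (fun c =>
            msum (shuffles (n.1 ++ [n.2.1], n.2.2).1 q'.1) (fun b =>
              if b = [] then 0 else if a = [] then 0
              else A (addLast b.sum a ++ c) * B b)))) = 0 := by
      rw [msum_map]
      refine (msum_congr fun m _ => ?_).trans (msum_zero _)
      refine (msum_congr fun a _ => ?_).trans (msum_zero _)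
      refine (msum_congr fun c _ => ?_).trans (msum_zero _)
      have hb : ∀ b ∈ shuffles (n.1 ++ [n.2.1]) (m.1 ++ [m.2.1]),
          (if b = [] then 0 else if a = [] then 0
            else A (addLast b.sum a ++ c) * B b)
          = (if a = [] then 0
              else A (addLast ((n.1 ++ [n.2.1]).sum + (m.1 ++ [m.2.1]).sum) a ++ c)) * B b := by
        intro b hbmem
        rw [if_neg (ne_nil_of_mem_shuffles (by simp) hbmem),
          sum_of_mem_shuffles _ _ _ hbmem]
        by_cases ha : a = []
        · rw [if_pos ha, if_pos ha, zero_mul]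
        · rw [if_neg ha, if_neg ha]
      rw [msum_congr hb, msum_mul_left, alternal_msum hB (by simp) (by simp), mul_zero]
    rw [hz, add_zero]
    refine msum_congr fun a _ => msum_congr fun c _ => ?_
    simp only [shuffles_nil_right, msum_singleton]
    rw [if_neg (by simp)]


noncomputable def gAm (A B : List K → K) (a b c : List K) : K :=
  if b = [] then 0 else if c = [] then 0 else A (a ++ addFirst b.sum c) * B b

noncomputable def gAn (A B : List K → K) (a b c : List K) : K :=
  if b = [] then 0 else if a = [] then 0 else A (addLast b.sum a ++ c) * B b

lemma msum_shuffles_comm {M : Type*} [AddCommMonoid M] (u v : List K) (h : List K → M) :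
    msum (shuffles u v) h = msum (shuffles v u) h := shuffles_comm_sum u v h

lemma amitU_splits3' (B A : List K → K) (w : List K) :
    amitU B A w = msum (splits3 w) (fun t => gAm A B t.1 t.2.1 t.2.2) := by
  rw [amitU_splits3]
  exact msum_congr fun t _ => rfl

lemma anitU_splits3' (B A : List K → K) (w : List K) :
    anitU B A w = msum (splits3 w) (fun t => gAn A B t.1 t.2.1 t.2.2) := by
  rw [anitU_splits3]
  exact msum_congr fun t _ => rfl

def RHSCanon (A B : List K → K) (u v : List K) : K :=
  msum (splits2 v) (fun q => msum (splitsMid q.2) (fun m =>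
    MID (fun w => A w * B (m.1 ++ [m.2.1])) (m.1 ++ [m.2.1]).sum u q.1 m.2.2))
  + msum (splits2 u) (fun p => msum (splitsMid p.2) (fun n =>
    MID (fun w => A w * B (n.1 ++ [n.2.1])) (n.1 ++ [n.2.1]).sum v p.1 n.2.2))

lemma amit_msum (A B : List K → K) (hA : Alternal A) (hB : Alternal B)
    (u v : List K) (hu : u ≠ []) (hv : v ≠ []) :
    msum (shuffles u v) (amitU B A) = RHSCanon A B u v := by
  rw [msum_congr (fun w _ => amitU_splits3' B A w), deconcat3 u v (gAm A B)]
  have step1 : ∀ p ∈ splits2 u, ∀ q ∈ splits2 v,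
      msum (splits2 p.2) (fun p' => msum (splits2 q.2) (fun q' =>
        msum (shuffles p.1 q.1) (fun a => msum (shuffles p'.2 q'.2) (fun c =>
          msum (shuffles p'.1 q'.1) (fun b => gAm A B a b c)))))
      = msum (splitsMid q.2) (fun m => msum (shuffles p.1 q.1) (fun a =>
          msum (shuffles p.2 m.2.2) (fun c => if c = [] then 0
            else A (a ++ addFirst (m.1 ++ [m.2.1]).sum c) * B (m.1 ++ [m.2.1]))))
        + msum (splitsMid p.2) (fun n => msum (shuffles p.1 q.1) (fun a =>
            msum (shuffles n.2.2 q.2) (fun c => if c = [] then 0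
              else A (a ++ addFirst (n.1 ++ [n.2.1]).sum c) * B (n.1 ++ [n.2.1])))) := by
    intro p _ q _
    exact inner_block_amit A B hB p.1 p.2 q.1 q.2
  rw [msum_congr (fun p hp => msum_congr (fun q hq => step1 p hp q hq))]
  rw [msum_congr (fun p _ => msum_add (splits2 v) _ _), msum_add]
  congr 1
  · -- v-side blocks
    rw [msum_comm]
    refine msum_congr fun q _ => ?_
    rw [msum_comm]
    refine msum_congr fun m _ => ?_
    rcases hm : m.2.2 with _ | ⟨y0, y'⟩
    · exact amit_decomp_nil (fun w => A w * B (m.1 ++ [m.2.1])) (m.1 ++ [m.2.1]).sum u q.1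
    · refine (amit_decomp_cons (fun w => A w * B (m.1 ++ [m.2.1]))
        (m.1 ++ [m.2.1]).sum u q.1 y0 y').trans ?_
      rw [msum_mul_right, alternal_msum hA hu (by simp), zero_mul, add_zero]
  · -- u-side blocks
    refine msum_congr fun p _ => ?_
    rw [msum_comm]
    refine msum_congr fun n _ => ?_
    have hsw : ∀ q ∈ splits2 v,
        msum (shuffles p.1 q.1) (fun a => msum (shuffles n.2.2 q.2) (fun c =>
          if c = [] then 0
          else A (a ++ addFirst (n.1 ++ [n.2.1]).sum c) * B (n.1 ++ [n.2.1])))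
        = msum (shuffles q.1 p.1) (fun a => msum (shuffles q.2 n.2.2) (fun c =>
          if c = [] then 0
          else A (a ++ addFirst (n.1 ++ [n.2.1]).sum c) * B (n.1 ++ [n.2.1]))) := by
      intro q _
      rw [msum_shuffles_comm]
      exact msum_congr fun a _ => msum_shuffles_comm _ _ _
    rw [msum_congr hsw]
    rcases hn : n.2.2 with _ | ⟨y0, y'⟩
    · exact amit_decomp_nil (fun w => A w * B (n.1 ++ [n.2.1])) (n.1 ++ [n.2.1]).sum v p.1
    · refine (amit_decomp_cons (fun w => A w * B (n.1 ++ [n.2.1]))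
        (n.1 ++ [n.2.1]).sum v p.1 y0 y').trans ?_
      rw [msum_mul_right, alternal_msum hA hv (by simp), zero_mul, add_zero]


lemma anit_msum (A B : List K → K) (hA : Alternal A) (hB : Alternal B)
    (u v : List K) (hu : u ≠ []) (hv : v ≠ []) :
    msum (shuffles u v) (anitU B A) = RHSCanon A B u v := by
  rw [msum_congr (fun w _ => anitU_splits3' B A w), deconcat3 u v (gAn A B)]
  have step1 : ∀ p ∈ splits2 u, ∀ q ∈ splits2 v,
      msum (splits2 p.2) (fun p' => msum (splits2 q.2) (fun q' =>
        msum (shuffles p.1 q.1) (fun a => msum (shuffles p'.2 q'.2) (fun c =>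
          msum (shuffles p'.1 q'.1) (fun b => gAn A B a b c)))))
      = msum (splitsMid q.2) (fun m => msum (shuffles p.1 q.1) (fun a =>
          msum (shuffles p.2 m.2.2) (fun c => if a = [] then 0
            else A (addLast (m.1 ++ [m.2.1]).sum a ++ c) * B (m.1 ++ [m.2.1]))))
        + msum (splitsMid p.2) (fun n => msum (shuffles p.1 q.1) (fun a =>
            msum (shuffles n.2.2 q.2) (fun c => if a = [] then 0
              else A (addLast (n.1 ++ [n.2.1]).sum a ++ c) * B (n.1 ++ [n.2.1])))) := by
    intro p _ q _
    exact inner_block_anit A B hB p.1 p.2 q.1 q.2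
  rw [msum_congr (fun p hp => msum_congr (fun q hq => step1 p hp q hq))]
  rw [msum_congr (fun p _ => msum_add (splits2 v) _ _), msum_add]
  congr 1
  · -- v-side blocks
    rw [msum_comm]
    refine msum_congr fun q _ => ?_
    rw [msum_comm]
    refine msum_congr fun m _ => ?_
    rcases List.eq_nil_or_concat q.1 with hq | ⟨x', z, hq⟩ <;>
      [skip; rw [List.concat_eq_append] at hq] <;> rw [hq]
    · exact anit_decomp_nil (fun w => A w * B (m.1 ++ [m.2.1])) (m.1 ++ [m.2.1]).sum u m.2.2
    · refine (anit_decomp_concat (fun w => A w * B (m.1 ++ [m.2.1]))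
        (m.1 ++ [m.2.1]).sum u m.2.2 x' z).trans ?_
      rw [msum_mul_right, alternal_msum hA hu (by simp), zero_mul, add_zero]
  · -- u-side blocks
    refine msum_congr fun p _ => ?_
    rw [msum_comm]
    refine msum_congr fun n _ => ?_
    have hsw : ∀ q ∈ splits2 v,
        msum (shuffles p.1 q.1) (fun a => msum (shuffles n.2.2 q.2) (fun c =>
          if a = [] then 0
          else A (addLast (n.1 ++ [n.2.1]).sum a ++ c) * B (n.1 ++ [n.2.1])))
        = msum (shuffles q.1 p.1) (fun a => msum (shuffles q.2 n.2.2) (fun c =>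
          if a = [] then 0
          else A (addLast (n.1 ++ [n.2.1]).sum a ++ c) * B (n.1 ++ [n.2.1]))) := by
      intro q _
      rw [msum_shuffles_comm]
      exact msum_congr fun a _ => msum_shuffles_comm _ _ _
    rw [msum_congr hsw]
    rcases List.eq_nil_or_concat p.1 with hp | ⟨x', z, hp⟩ <;>
      [skip; rw [List.concat_eq_append] at hp] <;> rw [hp]
    · exact anit_decomp_nil (fun w => A w * B (n.1 ++ [n.2.1])) (n.1 ++ [n.2.1]).sum v n.2.2
    · refine (anit_decomp_concat (fun w => A w * B (n.1 ++ [n.2.1]))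
        (n.1 ++ [n.2.1]).sum v n.2.2 x' z).trans ?_
      rw [msum_mul_right, alternal_msum hA hv (by simp), zero_mul, add_zero]


lemma msum_sub (l : List α) (f g : α → K) :
    msum l (fun x => f x - g x) = msum l f - msum l g := by
  induction l with
  | nil => simp
  | cons a l ih => simp [ih]; ring

lemma msum_add' (l : List α) (f g : α → K) :
    msum l (fun x => f x + g x) = msum l f + msum l g := msum_add l f g

lemma mu_msum (A B : List K → K) (w : List K) :
    mu A B w = msum (splits2 w) (fun p => A p.1 * B p.2) := by
  have h : ∀ (n : ℕ) (g : ℕ → K), ∑ k ∈ Finset.range n, g k = ((List.range n).map g).sum := by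
    intro n g
    induction n with
    | zero => simp
    | succ n ih => rw [Finset.sum_range_succ, List.range_succ]; simp [ih]
  unfold mu splits2 msum
  rw [h, List.map_map]
  rfl

lemma splitsMid_last_sum {M : Type*} [AddCommMonoid M] :
    ∀ (x' : List α) (z : α) (f : List α → α → M),
      msum (splitsMid (x' ++ [z])) (fun m => if m.2.2 = [] then f m.1 m.2.1 else 0) = f x' z
  | [], z, f => by simp [splitsMid]
  | t :: x', z, f => by
      have := splitsMid_last_sum x' z (fun a b => f (t :: a) b)
      simp only [List.cons_append, splitsMid, msum_cons, msum_map, List.append_eq]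
      rw [if_neg (by simp), this, zero_add]

lemma mu_shuffle_sum (A B : List K → K) (hA : Alternal A) (hB : Alternal B)
    (hA0 : A [] = 0) (hB0 : B [] = 0) (u v : List K) (hu : u ≠ []) (hv : v ≠ []) :
    msum (shuffles u v) (mu A B) = A v * B u + A u * B v := by
  rw [msum_congr (fun w _ => mu_msum A B w), deconcat u v (fun a b => A a * B b)]
  have inner : ∀ p ∈ splits2 u, ∀ q ∈ splits2 v,
      msum (shuffles p.1 q.1) (fun a => msum (shuffles p.2 q.2) (fun b => A a * B b))
        = msum (shuffles p.1 q.1) A * msum (shuffles p.2 q.2) B := by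
    intro p _ q _
    rw [← msum_mul_right]
    exact msum_congr fun a _ => msum_mul_left _ _ _
  rw [msum_congr (fun p hp => msum_congr (fun q hq => inner p hp q hq))]
  rw [splits2_eq_mid_fst u, splits2_eq_mid_fst v]
  simp only [msum_cons, msum_map, shuffles_nil_left, shuffles_nil_right, msum_singleton,
    msum_nil, add_zero, zero_add]
  rw [hA0, zero_mul, zero_add]
  have hgb : msum (splitsMid v) (fun m =>
      A (m.1 ++ [m.2.1]) * msum (shuffles u m.2.2) B)
      = A v * B u := by
    have hcong : ∀ m ∈ splitsMid v, A (m.1 ++ [m.2.1]) * msum (shuffles u m.2.2) B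
        = if m.2.2 = [] then A (m.1 ++ [m.2.1]) * B u else 0 := by
      intro m _
      rcases hm : m.2.2 with _ | ⟨w0, w'⟩
      · simp
      · rw [if_neg (by simp), alternal_msum hB hu (by simp), mul_zero]
    rw [msum_congr hcong]
    rcases List.eq_nil_or_concat v with hv' | ⟨x', z, hv'⟩
    · exact absurd hv' hv
    · rw [List.concat_eq_append] at hv'
      rw [hv', splitsMid_last_sum x' z (fun a b => A (a ++ [b]) * B u)]
  have hgc : ∀ n ∈ splitsMid u,
      (A (n.1 ++ [n.2.1]) * msum (shuffles n.2.2 v) B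
        + msum (splitsMid v) (fun m =>
            msum (shuffles (n.1 ++ [n.2.1]) (m.1 ++ [m.2.1])) A
              * msum (shuffles n.2.2 m.2.2) B))
      = if n.2.2 = [] then A (n.1 ++ [n.2.1]) * B v else 0 := by
    intro n _
    have hz : msum (splitsMid v) (fun m =>
        msum (shuffles (n.1 ++ [n.2.1]) (m.1 ++ [m.2.1])) A
          * msum (shuffles n.2.2 m.2.2) B) = 0 := by
      refine (msum_congr fun m _ => ?_).trans (msum_zero _)
      rw [alternal_msum hA (by simp) (by simp), zero_mul]
    rw [hz, add_zero]
    rcases hn : n.2.2 with _ | ⟨w0, w'⟩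
    · simp
    · rw [if_neg (by simp), alternal_msum hB (by simp) hv, mul_zero]
  rw [hgb, msum_congr hgc]
  rcases List.eq_nil_or_concat u with hu' | ⟨x', z, hu'⟩
  · exact absurd hu' hu
  · rw [List.concat_eq_append] at hu'
    rw [hu', splitsMid_last_sum x' z (fun a b => A (a ++ [b]) * B v)]

/-- the alternal moulds of ARI are closed under the ari-bracket. -/
theorem ariU_alternal (A B : List K → K) (hA0 : A [] = 0) (hB0 : B [] = 0)
    (hA : Alternal A) (hB : Alternal B) :
    ariU A B [] = 0 ∧ Alternal (ariU A B) := by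
  constructor
  · have h3 : splits3 ([] : List K) = [([], [], [])] := rfl
    simp [ariU, aritU, amitU, anitU, lu, mu, h3, hA0]
  · intro u v hu hv
    show msum (shuffles u v) (ariU A B) = 0
    have e2 : ∀ w ∈ shuffles u v, ariU A B w
        = ((fun w => amitU B A w - anitU B A w) w + (fun w => mu A B w - mu B A w) w)
          - (fun w => amitU A B w - anitU A B w) w := fun w _ => rfl
    rw [msum_congr e2, msum_sub, msum_add', msum_sub, msum_sub, msum_sub]
    rw [amit_msum A B hA hB u v hu hv, anit_msum A B hA hB u v hu hv,
      amit_msum B A hB hA u v hu hv, anit_msum B A hB hA u v hu hv,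
      mu_shuffle_sum A B hA hB hA0 hB0 u v hu hv,
      mu_shuffle_sum B A hB hA hB0 hA0 u v hu hv]
    ring
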